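/- Arrange the elements of [2r+1] on a circle. For S ⊆ [2r+1] let u(S) be the weakly decreasing sequence of lengths of maximal cyclic runs of elements of S, and z(S) the analogous sequence for the complement. Let T = {S ⊆ [2r+1] : u(S) is lexicographically greater than z(S)}. Then T is an intersecting family. -/

import Mathlib

open Finset

/-- The multiset of lengths of the maximal cyclic runs of `S` in the cycle `ZMod n`:
if `S` is everything there is a single run of length `n`; otherwise each run is
determined by its starting point `x` (an element of `S` with `x - 1 ∉ S`), and its
length is the number of `i < n` such that `x, x+1, …, x+i` all lie in `S`. -/
def cycleRunLengths (n : ℕ) [NeZero n] (S : Finset (ZMod n)) : Multiset ℕ :=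
  if S = Finset.univ then {n}
  else (S.filter fun x => x - 1 ∉ S).val.map
    (fun x => ((Finset.range n).filter fun i => ∀ j : ℕ, j ≤ i → x + (j : ZMod n) ∈ S).card)

/-- `u ≻ z`: the weakly decreasing rearrangement of `u` is lexicographically greater
than that of `z` (padding with zeros, which here corresponds to end-of-list). -/
def runLexGT (u z : Multiset ℕ) : Prop :=
  List.Lex (· < ·) (z.sort (· ≤ ·)).reverse (u.sort (· ≤ ·)).reverse

set_option linter.unusedSectionVars false

/-- sorted-decreasing list of a multiset of naturals -/
def sdesc (M : Multiset ℕ) : List ℕ := (M.sort (· ≤ ·)).reverse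

def LexLe (l₁ l₂ : List ℕ) : Prop := List.Lex (· < ·) l₁ l₂ ∨ l₁ = l₂

lemma LexLe.refl (l : List ℕ) : LexLe l l := Or.inr rfl

lemma LexLe.trans_lt {l₁ l₂ l₃ : List ℕ} (h : LexLe l₁ l₂) (h' : List.Lex (· < ·) l₂ l₃) :
    List.Lex (· < ·) l₁ l₃ := by
  rcases h with h | rfl
  · exact List.lex_trans Nat.lt_trans h h'
  · exact h'

lemma LexLe.cons {l₁ l₂ : List ℕ} (a : ℕ) (h : LexLe l₁ l₂) : LexLe (a :: l₁) (a :: l₂) := by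
  rcases h with h | rfl
  · exact Or.inl (List.Lex.cons h)
  · exact Or.inr rfl

lemma sdesc_zero : sdesc 0 = [] := by simp [sdesc]

lemma sdesc_cons_max {M : Multiset ℕ} {a : ℕ} (h : ∀ b ∈ M, b ≤ a) :
    sdesc (a ::ₘ M) = a :: sdesc M := by
  have hperm : (a ::ₘ M).sort (· ≤ ·) = M.sort (· ≤ ·) ++ [a] := by
    apply (fun hp h1 h2 => List.Perm.eq_of_pairwise' (r := (· ≤ · : ℕ → ℕ → Prop)) h1 h2 hp)
    · rw [← Multiset.coe_eq_coe, ← Multiset.coe_add, Multiset.sort_eq, Multiset.sort_eq,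
        Multiset.coe_singleton, add_comm, Multiset.singleton_add]
    · exact Multiset.pairwise_sort _ _
    · refine List.pairwise_append.mpr ⟨Multiset.pairwise_sort _ _, List.pairwise_singleton _ a, ?_⟩
      intro x hx y hy
      simp only [List.mem_singleton] at hy
      subst hy
      exact h x (by rwa [Multiset.mem_sort] at hx)
  simp [sdesc, hperm]

lemma sdesc_peel {M : Multiset ℕ} (h : M ≠ 0) :
    ∃ m, m ∈ M ∧ (∀ b ∈ M, b ≤ m) ∧ sdesc M = m :: sdesc (M.erase m) := by
  have hne : M.toFinset.Nonempty := by
    obtain ⟨a, ha⟩ := Multiset.exists_mem_of_ne_zero h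
    exact ⟨a, Multiset.mem_toFinset.mpr ha⟩
  set m := M.toFinset.max' hne with hm
  have hmem : m ∈ M := Multiset.mem_toFinset.mp (M.toFinset.max'_mem hne)
  have hbd : ∀ b ∈ M, b ≤ m := fun b hb =>
    M.toFinset.le_max' b (Multiset.mem_toFinset.mpr hb)
  refine ⟨m, hmem, hbd, ?_⟩
  conv_lhs => rw [← Multiset.cons_erase hmem]
  exact sdesc_cons_max fun b hb => hbd b (Multiset.mem_of_mem_erase hb)

lemma lexLe_add : ∀ (k : ℕ) (M N : Multiset ℕ) (c : ℕ), M.card = k →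
    (∀ a ∈ N, 0 < a) → (∀ a ∈ N, a ≤ c) → N.sum ≤ c →
    LexLe (sdesc (M + N)) (sdesc (M + {c})) := by
  intro k
  induction k using Nat.strong_induction_on with
  | _ k IH =>
    intro M N c hk hpos hle hsum
    have hMc : M + {c} = c ::ₘ M := by rw [add_comm, Multiset.singleton_add]
    by_cases hM : ∀ b ∈ M, b ≤ c
    · have h1 : sdesc (M + {c}) = c :: sdesc M := by
        rw [hMc]; exact sdesc_cons_max hM
      by_cases h0 : M + N = 0
      · rw [h0, h1, sdesc_zero]
        exact Or.inl List.Lex.nil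
      · obtain ⟨m, hmem, hbd, hpeel⟩ := sdesc_peel h0
        rw [hpeel, h1]
        have hmc : m ≤ c := by
          rcases Multiset.mem_add.mp hmem with h | h
          · exact hM m h
          · exact hle m h
        rcases lt_or_eq_of_le hmc with hlt | heq
        · exact Or.inl (List.Lex.rel hlt)
        · subst heq
          rcases Multiset.mem_add.mp hmem with hcM | hcN
          · have he : (M + N).erase m = M.erase m + N := Multiset.erase_add_left_pos N hcM
            have hcard : (M.erase m).card < k := by
              rw [← hk]; exact Multiset.card_erase_lt_of_mem hcM
            have IH' := IH _ hcard (M.erase m) N m rfl hpos hle hsum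
            have h2 : M.erase m + {m} = M := by
              rw [add_comm, Multiset.singleton_add, Multiset.cons_erase hcM]
            rw [he]
            rw [h2] at IH'
            exact IH'.cons m
          · have hN : N = {m} := by
              have h2 : N = m ::ₘ N.erase m := (Multiset.cons_erase hcN).symm
              have h3 : (N.erase m).sum = 0 := by
                have : N.sum = m + (N.erase m).sum := by rw [h2]; simp
                omega
              have h4 : N.erase m = 0 := by
                by_contra h5
                obtain ⟨a, ha⟩ := Multiset.exists_mem_of_ne_zero h5
                have : 0 < a := hpos a (Multiset.mem_of_mem_erase ha)
                have : a ≤ (N.erase m).sum :=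
                  Multiset.single_le_sum (fun x _ => Nat.zero_le x) a ha
                omega
              rw [h2, h4]; rfl
            rw [hN, hMc, Multiset.erase_cons_head]
            exact LexLe.refl _
    · push_neg at hM
      obtain ⟨b, hbM, hbc⟩ := hM
      have h0 : M ≠ 0 := fun h => by simp [h] at hbM
      have hne : M.toFinset.Nonempty := by
        obtain ⟨a, ha⟩ := Multiset.exists_mem_of_ne_zero h0
        exact ⟨a, Multiset.mem_toFinset.mpr ha⟩
      set m := M.toFinset.max' hne with hm
      have hmem : m ∈ M := Multiset.mem_toFinset.mp (M.toFinset.max'_mem hne)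
      have hbd : ∀ x ∈ M, x ≤ m := fun x hx =>
        M.toFinset.le_max' x (Multiset.mem_toFinset.mpr hx)
      have hcm : c < m := lt_of_lt_of_le hbc (hbd b hbM)
      have e1 : M + N = m ::ₘ (M.erase m + N) := by
        conv_lhs => rw [← Multiset.cons_erase hmem, Multiset.cons_add]
      have e2 : M + {c} = m ::ₘ (M.erase m + {c}) := by
        conv_lhs => rw [← Multiset.cons_erase hmem, Multiset.cons_add]
      rw [e1, e2, sdesc_cons_max, sdesc_cons_max]
      · have hcard : (M.erase m).card < k := by
          rw [← hk]; exact Multiset.card_erase_lt_of_mem hmem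
        exact (IH _ hcard (M.erase m) N c rfl hpos hle hsum).cons m
      · intro x hx
        rcases Multiset.mem_add.mp hx with h | h
        · exact hbd x (Multiset.mem_of_mem_erase h)
        · simp only [Multiset.mem_singleton] at h; omega
      · intro x hx
        rcases Multiset.mem_add.mp hx with h | h
        · exact hbd x (Multiset.mem_of_mem_erase h)
        · exact le_of_lt (lt_of_le_of_lt (hle x h) hcm)

lemma lexLe_cons_new (M : Multiset ℕ) (c : ℕ) : LexLe (sdesc M) (sdesc (c ::ₘ M)) := by
  have := lexLe_add M.card M 0 c rfl (by simp) (by simp) (by simp)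
  rwa [add_zero, add_comm, Multiset.singleton_add] at this

lemma lexLe_replace (M : Multiset ℕ) (L c : ℕ) (h1 : 0 < L) (h2 : L ≤ c) :
    LexLe (sdesc (L ::ₘ M)) (sdesc (c ::ₘ M)) := by
  have := lexLe_add M.card M {L} c rfl (by simpa) (by simpa) (by simpa)
  rwa [add_comm M {L}, Multiset.singleton_add, add_comm M {c}, Multiset.singleton_add] at this

lemma lexLe_merge (M : Multiset ℕ) (L₁ L₂ : ℕ) (h1 : 0 < L₁) (h2 : 0 < L₂) :
    LexLe (sdesc (L₁ ::ₘ L₂ ::ₘ M)) (sdesc ((L₁ + L₂ + 1) ::ₘ M)) := by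
  have := lexLe_add M.card M (L₁ ::ₘ {L₂}) (L₁ + L₂ + 1) rfl ?_ ?_ ?_
  · have e : M + (L₁ ::ₘ {L₂}) = L₁ ::ₘ L₂ ::ₘ M := by
      rw [add_comm, Multiset.cons_add, Multiset.singleton_add]
    have e2 : M + {L₁ + L₂ + 1} = (L₁ + L₂ + 1) ::ₘ M := by
      rw [add_comm, Multiset.singleton_add]
    rwa [e, e2] at this
  · intro a ha; rcases Multiset.mem_cons.mp ha with rfl | h
    · exact h1
    · simp only [Multiset.mem_singleton] at h; omega
  · intro a ha; rcases Multiset.mem_cons.mp ha with rfl | h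
    · omega
    · simp only [Multiset.mem_singleton] at h; omega
  · simp only [Multiset.sum_cons, Multiset.sum_singleton]; omega

open Finset

section Runs
variable {n : ℕ} [NeZero n]

/-- length of the run of `S` starting (forward) at `x` -/
def rlen (S : Finset (ZMod n)) (x : ZMod n) : ℕ :=
  ((Finset.range n).filter fun i => ∀ j : ℕ, j ≤ i → x + (j : ZMod n) ∈ S).card

def starts (S : Finset (ZMod n)) : Finset (ZMod n) := S.filter fun x => x - 1 ∉ S

lemma mem_starts {S : Finset (ZMod n)} {x : ZMod n} :
    x ∈ starts S ↔ x ∈ S ∧ x - 1 ∉ S := by simp [starts]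

lemma cycleRunLengths_eq (S : Finset (ZMod n)) (h : S ≠ univ) :
    cycleRunLengths n S = (starts S).val.map (rlen S) := by
  rw [cycleRunLengths, if_neg h]; rfl

lemma downclosed_eq_range (F : Finset ℕ) (h : ∀ i j : ℕ, i ≤ j → j ∈ F → i ∈ F) :
    F = Finset.range F.card := by
  ext k
  simp only [Finset.mem_range]
  constructor
  · intro hk
    have hsub : Finset.range (k + 1) ⊆ F := fun j hj =>
      h j k (Nat.lt_succ_iff.mp (Finset.mem_range.mp hj)) hk
    have := Finset.card_le_card hsub
    simp only [Finset.card_range] at this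
    omega
  · intro hk
    by_contra hkF
    have hsub : F ⊆ Finset.range k := by
      intro j hj
      rw [Finset.mem_range]
      by_contra h'
      exact hkF (h k j (le_of_not_gt h') hj)
    have := Finset.card_le_card hsub
    simp only [Finset.card_range] at this
    omega

lemma filter_chain_eq_range (S : Finset (ZMod n)) (x : ZMod n) :
    ((Finset.range n).filter fun i => ∀ j : ℕ, j ≤ i → x + (j : ZMod n) ∈ S)
      = Finset.range (rlen S x) := by
  apply downclosed_eq_range
  intro i j hij hj
  simp only [Finset.mem_filter, Finset.mem_range] at hj ⊢
  exact ⟨lt_of_le_of_lt hij hj.1, fun j' hj' => hj.2 j' (le_trans hj' hij)⟩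

lemma chain_of_lt_rlen {S : Finset (ZMod n)} {x : ZMod n} {i : ℕ} (h : i < rlen S x) :
    i < n ∧ ∀ j : ℕ, j ≤ i → x + (j : ZMod n) ∈ S := by
  have : i ∈ Finset.range (rlen S x) := Finset.mem_range.mpr h
  rw [← filter_chain_eq_range] at this
  simp only [Finset.mem_filter, Finset.mem_range] at this
  exact this

lemma mem_of_lt_rlen {S : Finset (ZMod n)} {x : ZMod n} {i : ℕ} (h : i < rlen S x) :
    x + (i : ZMod n) ∈ S := (chain_of_lt_rlen h).2 i le_rfl

lemma lt_rlen {S : Finset (ZMod n)} {x : ZMod n} {i : ℕ} (hi : i < n)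
    (hc : ∀ j : ℕ, j ≤ i → x + (j : ZMod n) ∈ S) : i < rlen S x := by
  have : i ∈ ((Finset.range n).filter fun i => ∀ j : ℕ, j ≤ i → x + (j : ZMod n) ∈ S) := by
    simp only [Finset.mem_filter, Finset.mem_range]; exact ⟨hi, hc⟩
  rw [filter_chain_eq_range] at this
  exact Finset.mem_range.mp this

lemma rlen_le_of_not_mem {S : Finset (ZMod n)} {x : ZMod n} {i : ℕ}
    (h : x + (i : ZMod n) ∉ S) : rlen S x ≤ i := by
  by_contra h'
  exact h (mem_of_lt_rlen (lt_of_not_ge h'))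

lemma rlen_le_n (S : Finset (ZMod n)) (x : ZMod n) : rlen S x ≤ n := by
  have := Finset.card_filter_le (Finset.range n)
    (fun i => ∀ j : ℕ, j ≤ i → x + (j : ZMod n) ∈ S)
  simpa [rlen] using this

lemma rlen_pos {S : Finset (ZMod n)} {x : ZMod n} (hx : x ∈ S) : 0 < rlen S x := by
  apply lt_rlen (Nat.pos_of_ne_zero (NeZero.ne n))
  intro j hj
  interval_cases j
  simpa using hx

lemma univ_of_chain {S : Finset (ZMod n)} {x : ZMod n} {i : ℕ}
    (hc : ∀ j : ℕ, j ≤ i → x + (j : ZMod n) ∈ S) (hi : n - 1 ≤ i) : S = univ := by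
  apply Finset.eq_univ_of_forall
  intro y
  have h1 : ((y - x).val : ZMod n) = y - x := ZMod.natCast_rightInverse _
  have hv : (y - x).val < n := ZMod.val_lt _
  have h2 : (y - x).val ≤ i := by omega
  have := hc _ h2
  rwa [h1, add_sub_cancel] at this

lemma rlen_lt_n {S : Finset (ZMod n)} (hS : S ≠ univ) (x : ZMod n) : rlen S x < n := by
  rcases lt_or_eq_of_le (rlen_le_n S x) with h | h
  · exact h
  · exfalso
    apply hS
    have hn : 0 < n := Nat.pos_of_ne_zero (NeZero.ne n)
    have : n - 1 < rlen S x := by omega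
    exact univ_of_chain (chain_of_lt_rlen this).2 le_rfl

lemma end_not_mem {S : Finset (ZMod n)} (hS : S ≠ univ) (x : ZMod n) :
    x + ((rlen S x : ℕ) : ZMod n) ∉ S := by
  intro hmem
  have hlt : rlen S x < n := rlen_lt_n hS x
  have : rlen S x < rlen S x := by
    apply lt_rlen hlt
    intro j hj
    rcases lt_or_eq_of_le hj with h | h
    · exact mem_of_lt_rlen h
    · subst h; exact hmem
  omega

lemma rlen_mono {S T : Finset (ZMod n)} (h : S ⊆ T) (x : ZMod n) : rlen S x ≤ rlen T x := by
  apply Finset.card_le_card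
  apply Finset.monotone_filter_right
  intro i _ hi j hj
  exact h (hi j hj)

lemma chain_insert {A : Finset (ZMod n)} {x y : ZMod n} (hx : x ∉ A) (hy : y ∈ A) {i : ℕ}
    (hc : ∀ j : ℕ, j ≤ i → y + (j : ZMod n) ∈ insert x A) :
    (∀ j : ℕ, j ≤ i → y + (j : ZMod n) ∈ A) ∨
      ∃ j : ℕ, 1 ≤ j ∧ j ≤ i ∧ y + (j : ZMod n) = x ∧
        ∀ j' : ℕ, j' ≤ j - 1 → y + (j' : ZMod n) ∈ A := by
  by_cases hex : ∃ j : ℕ, j ≤ i ∧ y + (j : ZMod n) = x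
  · right
    have hj₀ := Nat.find_spec hex
    set j₀ := Nat.find hex with hj₀def
    have hmin : ∀ j' < j₀, ¬(j' ≤ i ∧ y + (j' : ZMod n) = x) := fun j' h => Nat.find_min hex h
    have h1 : 1 ≤ j₀ := by
      rcases Nat.eq_zero_or_pos j₀ with h | h
      · exfalso; rw [h] at hj₀
        simp only [Nat.cast_zero, add_zero] at hj₀
        exact hx (hj₀.2 ▸ hy)
      · exact h
    refine ⟨j₀, h1, hj₀.1, hj₀.2, ?_⟩
    intro j' hj'
    have hj'i : j' ≤ i := by omega
    have := hc j' hj'i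
    rcases Finset.mem_insert.mp this with h | h
    · exact absurd ⟨hj'i, h⟩ (hmin j' (by omega))
    · exact h
  · left
    intro j hj
    rcases Finset.mem_insert.mp (hc j hj) with h | h
    · exact absurd ⟨hj, h⟩ (fun hh => hex ⟨j, hh⟩)
    · exact h

lemma mem_negimg {A : Finset (ZMod n)} {b : ZMod n} :
    b ∈ A.image (fun a => -a) ↔ -b ∈ A := by
  simp only [Finset.mem_image]
  constructor
  · rintro ⟨a, ha, rfl⟩; simpa using ha
  · intro h; exact ⟨-b, h, by simp⟩

lemma start_exists {A : Finset (ZMod n)} (hA : A ≠ univ) {z : ZMod n} (hz : z ∈ A) :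
    ∃ y ∈ starts A, (z - y).val < rlen A y := by
  set A' : Finset (ZMod n) := A.image (fun a => -a) with hA'def
  have hmem' : ∀ w : ZMod n, w ∈ A' ↔ -w ∈ A := fun w => mem_negimg
  have hA' : A' ≠ univ := by
    intro h
    apply hA
    apply Finset.eq_univ_of_forall
    intro w
    have : -w ∈ A' := h ▸ Finset.mem_univ _
    simpa using (hmem' (-w)).mp this
  set b := rlen A' (-z) with hbdef
  have hb0 : 0 < b := rlen_pos ((hmem' (-z)).mpr (by simpa using hz))
  have hbn : b < n := rlen_lt_n hA' (-z)
  have hback : ∀ j : ℕ, j ≤ b - 1 → z - (j : ZMod n) ∈ A := by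
    intro j hj
    have : -z + (j : ZMod n) ∈ A' := (chain_of_lt_rlen (show (b-1 : ℕ) < b by omega)).2 j hj
    have := (hmem' _).mp this
    rwa [neg_add, neg_neg, ← sub_eq_add_neg] at this
  have hend : z - (b : ZMod n) ∉ A := by
    intro hc
    apply end_not_mem hA' (-z)
    rw [hmem', neg_add, neg_neg, ← sub_eq_add_neg]
    exact hc
  refine ⟨z - ((b - 1 : ℕ) : ZMod n), ?_, ?_⟩
  · rw [mem_starts]
    constructor
    · exact hback (b-1) le_rfl
    · have hcast : ((b - 1 : ℕ) : ZMod n) + 1 = (b : ZMod n) := by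
        have : ((b - 1 : ℕ) : ZMod n) + ((1:ℕ) : ZMod n) = (((b-1)+1 : ℕ) : ZMod n) := by
          push_cast; ring
        rw [show ((1:ℕ) : ZMod n) = 1 by push_cast; ring] at this
        rw [this]; congr 1; omega
      have : z - ((b - 1 : ℕ) : ZMod n) - 1 = z - (b : ZMod n) := by
        rw [← hcast]; ring
      rw [this]; exact hend
  · have hv : (z - (z - ((b - 1 : ℕ) : ZMod n))).val = b - 1 := by
      have : z - (z - ((b - 1 : ℕ) : ZMod n)) = ((b - 1 : ℕ) : ZMod n) := by ring
      rw [this, ZMod.val_cast_of_lt (by omega)]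
    rw [hv]
    apply lt_rlen (show b - 1 < n by omega)
    intro j hj
    have hcast : z - ((b - 1 : ℕ) : ZMod n) + (j : ZMod n) = z - ((b - 1 - j : ℕ) : ZMod n) := by
      have : ((b - 1 : ℕ) : ZMod n) = ((b - 1 - j : ℕ) : ZMod n) + (j : ZMod n) := by
        rw [← Nat.cast_add]; congr 1; omega
      rw [this]; ring
    rw [hcast]
    exact hback _ (by omega)

lemma start_unique_aux {A : Finset (ZMod n)} {z y y' : ZMod n}
    (hy' : y' ∈ starts A)
    (h1 : (z - y).val < rlen A y) (h2 : (z - y').val < rlen A y')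
    (hle : (z - y').val ≤ (z - y).val) : y = y' := by
  set t := (z - y).val with htdef
  set t' := (z - y').val with ht'def
  have hzy : y + (t : ZMod n) = z := by
    rw [htdef, ZMod.natCast_rightInverse _]; ring
  have hzy' : y' + (t' : ZMod n) = z := by
    rw [ht'def, ZMod.natCast_rightInverse _]; ring
  rcases eq_or_lt_of_le hle with heq | hlt
  · rw [heq] at hzy'
    exact add_right_cancel (hzy.trans hzy'.symm)
  · exfalso
    have hd : 1 ≤ t - t' := by omega
    have hy'eq : y' = y + ((t - t' : ℕ) : ZMod n) := by
      have : ((t : ZMod n)) = ((t - t' : ℕ) : ZMod n) + (t' : ZMod n) := by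
        rw [← Nat.cast_add]; congr 1; omega
      have h3 : y + ((t - t' : ℕ) : ZMod n) + (t' : ZMod n) = z := by
        rw [add_assoc, ← this]; exact hzy
      exact (add_right_cancel (h3.trans hzy'.symm)).symm
    have hchain := (chain_of_lt_rlen h1).2
    have hmem : y + ((t - t' - 1 : ℕ) : ZMod n) ∈ A := hchain _ (by omega)
    have : y' - 1 = y + ((t - t' - 1 : ℕ) : ZMod n) := by
      rw [hy'eq]
      have : ((t - t' : ℕ) : ZMod n) = ((t - t' - 1 : ℕ) : ZMod n) + 1 := by
        rw [show (1 : ZMod n) = ((1:ℕ) : ZMod n) by push_cast; ring, ← Nat.cast_add]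
        congr 1; omega
      rw [this]; ring
    rw [mem_starts] at hy'
    exact hy'.2 (this ▸ hmem)

lemma start_unique {A : Finset (ZMod n)} {z y y' : ZMod n}
    (hy : y ∈ starts A) (hy' : y' ∈ starts A)
    (h1 : (z - y).val < rlen A y) (h2 : (z - y').val < rlen A y') : y = y' := by
  rcases le_total ((z - y').val) ((z - y).val) with h | h
  · exact start_unique_aux hy' h1 h2 h
  · exact (start_unique_aux hy h2 h1 h).symm
end Runs

section Step
variable {n : ℕ} [NeZero n]

lemma cast_pred {k : ℕ} (hk : 1 ≤ k) : ((k : ℕ) : ZMod n) = ((k - 1 : ℕ) : ZMod n) + 1 :=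
  calc ((k : ℕ) : ZMod n) = (((k-1)+1 : ℕ) : ZMod n) := by congr 1; omega
  _ = ((k - 1 : ℕ) : ZMod n) + 1 := by push_cast; ring

lemma keep_len {A : Finset (ZMod n)} (hA : A ≠ univ) {x y : ZMod n}
    (hyA : y ∈ A) (hne : y + ((rlen A y : ℕ) : ZMod n) ≠ x) :
    rlen (insert x A) y = rlen A y := by
  apply le_antisymm
  · apply rlen_le_of_not_mem
    intro h
    rcases Finset.mem_insert.mp h with h | h
    · exact hne h
    · exact end_not_mem hA y h
  · exact rlen_mono (Finset.subset_insert x A) y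

lemma end_eq_x {A : Finset (ZMod n)} {x y : ZMod n} (hyA : y ∈ A)
    (heq : y + ((rlen A y : ℕ) : ZMod n) = x) :
    x - 1 ∈ A ∧ (x - 1 - y).val < rlen A y := by
  have hpos : 0 < rlen A y := rlen_pos hyA
  have hlen : rlen A y ≤ n := rlen_le_n A y
  have hn : 0 < n := Nat.pos_of_ne_zero (NeZero.ne n)
  have hc : y + ((rlen A y - 1 : ℕ) : ZMod n) = x - 1 := by
    rw [cast_pred hpos] at heq
    rw [← heq]; ring
  have hmem : y + ((rlen A y - 1 : ℕ) : ZMod n) ∈ A :=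
    mem_of_lt_rlen (show rlen A y - 1 < rlen A y by omega)
  have hval : (x - 1 - y).val = rlen A y - 1 := by
    rw [← hc]
    have : y + ((rlen A y - 1 : ℕ) : ZMod n) - y = ((rlen A y - 1 : ℕ) : ZMod n) := by ring
    rw [this, ZMod.val_cast_of_lt (by omega)]
  exact ⟨hc ▸ hmem, by omega⟩

lemma step_insert {A : Finset (ZMod n)} {x : ZMod n} (hx : x ∉ A) :
    LexLe (sdesc (cycleRunLengths n A)) (sdesc (cycleRunLengths n (insert x A))) := by
  have hA : A ≠ univ := fun h => hx (h ▸ Finset.mem_univ x)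
  set B := insert x A with hBdef
  have hxB : x ∈ B := Finset.mem_insert_self x A
  have hAB : A ⊆ B := Finset.subset_insert x A
  by_cases hB : B = univ
  · rw [show cycleRunLengths n B = {n} from by rw [cycleRunLengths, if_pos hB]]
    have hsd : sdesc ({n} : Multiset ℕ) = [n] := by
      simp [sdesc, Multiset.sort_singleton]
    rw [hsd]
    by_cases h0 : cycleRunLengths n A = 0
    · rw [h0, sdesc_zero]; exact Or.inl List.Lex.nil
    · obtain ⟨m, hmem, _, hpeel⟩ := sdesc_peel h0
      rw [hpeel]
      left
      apply List.Lex.rel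
      rw [cycleRunLengths_eq A hA] at hmem
      obtain ⟨y, hy, rfl⟩ := Multiset.mem_map.mp hmem
      exact rlen_lt_n hA y
  · have hone : (1 : ZMod n) ≠ 0 := by
      intro h
      apply hB
      apply Finset.eq_univ_of_forall
      intro y
      have hn1 : n ∣ 1 := by
        apply (ZMod.natCast_eq_zero_iff 1 n).mp
        push_cast
        exact h
      have hv : (y - x).val = 0 := by
        have h2 := ZMod.val_lt (y - x)
        have := Nat.dvd_one.mp hn1
        omega
      have hyx : y = x := by
        have h2 : ((y - x).val : ZMod n) = y - x := ZMod.natCast_rightInverse _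
        rw [hv] at h2
        push_cast at h2
        exact sub_eq_zero.mp h2.symm
      rw [hyx]; exact hxB
    have hx1 : x - 1 ≠ x := fun h => hone (by
      have : x - 1 - x = 0 := by rw [h]; ring
      have h2 : x - 1 - x = -1 := by ring
      rw [h2] at this
      simpa [neg_eq_zero] using this)
    have hx1' : x + 1 ≠ x := fun h => hone (by
      have : x + 1 - x = 0 := by rw [h]; ring
      rwa [show x + 1 - x = 1 from by ring] at this)
    rw [cycleRunLengths_eq A hA, cycleRunLengths_eq B hB]
    by_cases h1 : x - 1 ∈ A <;> by_cases h2 : x + 1 ∈ A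
    · -- case d : merge two runs
      obtain ⟨y₀, hy₀S, hreach⟩ := start_exists hA h1
      have hy₀A : y₀ ∈ A := (mem_starts.mp hy₀S).1
      set t := (x - 1 - y₀).val with htdef
      set ℓ₁ := rlen A y₀ with hl1def
      have hzx : y₀ + (t : ZMod n) = x - 1 := by
        rw [htdef, ZMod.natCast_rightInverse _]; ring
      have hl1n : ℓ₁ < n := rlen_lt_n hA y₀
      have hcast1 : y₀ + ((t + 1 : ℕ) : ZMod n) = x := by
        push_cast
        rw [← add_assoc, hzx]; ring
      have hl1 : ℓ₁ = t + 1 := by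
        have hub : rlen A y₀ ≤ t + 1 := by
          apply rlen_le_of_not_mem
          rw [hcast1]; exact hx
        omega
      have hx1S : x + 1 ∈ starts A := mem_starts.mpr ⟨h2, by
        rw [show x + 1 - 1 = x from by ring]; exact hx⟩
      set ℓ₂ := rlen A (x+1) with hl2def
      have hl2n : ℓ₂ < n := rlen_lt_n hA (x+1)
      have hy₀ne : y₀ ≠ x + 1 := by
        intro he
        apply hB
        have htge : n ≤ t + 2 := by
          have h4 : ((t + 2 : ℕ) : ZMod n) = 0 := by
            push_cast
            have h5 : (t : ZMod n) = x - 1 - y₀ := by rw [← hzx]; ring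
            rw [h5, he]; ring
          exact Nat.le_of_dvd (by omega) ((ZMod.natCast_eq_zero_iff _ n).mp h4)
        apply univ_of_chain (x := y₀) (i := n - 1) ?_ le_rfl
        intro j hj
        rcases Nat.lt_or_ge j (t+1) with hlt | hge
        · exact hAB ((chain_of_lt_rlen (show j < ℓ₁ by omega)).2 j le_rfl)
        · have hje : j = t + 1 := by omega
          subst hje
          rw [hcast1]; exact hxB
      have hSB : starts B = (starts A).erase (x+1) := by
        ext y
        rw [mem_starts, Finset.mem_erase, mem_starts]
        constructor
        · rintro ⟨hyB, hy1⟩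
          rcases Finset.mem_insert.mp hyB with rfl | hyA
          · exact absurd (hAB h1) hy1
          · refine ⟨?_, hyA, fun hc => hy1 (hAB hc)⟩
            rintro rfl
            exact hy1 (by rw [show x + 1 - 1 = x from by ring]; exact hxB)
        · rintro ⟨hne, hyA, hy1⟩
          refine ⟨hAB hyA, fun hc => ?_⟩
          rcases Finset.mem_insert.mp hc with h | h
          · exact hne (by rw [← h]; ring)
          · exact hy1 h
      have hchainB : ∀ j : ℕ, j ≤ t + 1 + ℓ₂ → y₀ + (j : ZMod n) ∈ B := by
        intro j hj
        rcases Nat.lt_or_ge j (t+1) with hlt | hge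
        · exact hAB ((chain_of_lt_rlen (show j < ℓ₁ by omega)).2 j le_rfl)
        rcases Nat.eq_or_lt_of_le hge with he | hgt
        · rw [he] at hcast1; rw [hcast1]; exact hxB
        · apply hAB
          have hc := (chain_of_lt_rlen (show j - (t+2) < ℓ₂ by omega)).2 _ le_rfl
          rw [show y₀ + (j : ZMod n) = (x+1) + ((j - (t+2) : ℕ) : ZMod n) from ?_]
          · exact hc
          · have hj2 : ((j : ℕ) : ZMod n) = ((t + 1 : ℕ) : ZMod n) + 1 + ((j - (t+2) : ℕ) : ZMod n) := by
              rw [← Nat.cast_one (R := ZMod n), ← Nat.cast_add, ← Nat.cast_add]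
              congr 1; omega
            rw [hj2, ← add_assoc, ← add_assoc, hcast1]
      have hltn : t + 1 + ℓ₂ < n - 1 := by
        by_contra hge
        exact hB (univ_of_chain hchainB (by omega))
      have hlB : rlen B y₀ = ℓ₁ + ℓ₂ + 1 := by
        have hcast2 : y₀ + ((t + 2 + ℓ₂ : ℕ) : ZMod n) = (x + 1) + ((ℓ₂ : ℕ) : ZMod n) := by
          have : ((t + 2 + ℓ₂ : ℕ) : ZMod n) = ((t+1 : ℕ) : ZMod n) + 1 + ((ℓ₂ : ℕ) : ZMod n) := by
            push_cast; ring
          rw [this, ← add_assoc, ← add_assoc, hcast1]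
        have hub : rlen B y₀ ≤ t + 2 + ℓ₂ := by
          apply rlen_le_of_not_mem
          rw [hcast2]
          intro hc
          rcases Finset.mem_insert.mp hc with h | h
          · have h4 : ((ℓ₂ + 1 : ℕ) : ZMod n) = 0 := by
              push_cast
              have : x + 1 + (ℓ₂ : ZMod n) - x = 0 := by rw [h]; ring
              rw [← this]; ring
            have := Nat.le_of_dvd (by omega) ((ZMod.natCast_eq_zero_iff _ n).mp h4)
            omega
          · exact end_not_mem hA (x+1) h
        have hlb : t + 1 + ℓ₂ < rlen B y₀ := lt_rlen (by omega) hchainB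
        omega
      have hkeep : ∀ y, y ∈ starts A → y ≠ y₀ → rlen B y = rlen A y := by
        intro y hyS hne
        apply keep_len hA (mem_starts.mp hyS).1
        intro heq
        obtain ⟨_, hv⟩ := end_eq_x (mem_starts.mp hyS).1 heq
        exact hne (start_unique hyS hy₀S hv hreach)
      have hx1v : (x+1) ∈ (starts A).val := hx1S
      have hy₀in : y₀ ∈ (starts A).val.erase (x+1) :=
        (Multiset.mem_erase_of_ne hy₀ne).mpr hy₀S
      set T := ((starts A).val.erase (x+1)).erase y₀ with hTdef
      have hcons2 : (starts A).val.erase (x+1) = y₀ ::ₘ T := (Multiset.cons_erase hy₀in).symm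
      have hcons : (starts A).val = (x+1) ::ₘ y₀ ::ₘ T := by
        rw [← hcons2, Multiset.cons_erase hx1v]
      have hTmem : ∀ y ∈ T, y ∈ starts A ∧ y ≠ y₀ := by
        intro y hy
        have h5 := ((starts A).nodup.erase (x+1)).mem_erase_iff.mp hy
        exact ⟨Multiset.mem_of_mem_erase h5.2, h5.1⟩
      have eA : (starts A).val.map (rlen A) = ℓ₂ ::ₘ ℓ₁ ::ₘ T.map (rlen A) := by
        rw [hcons, Multiset.map_cons, Multiset.map_cons]
      have eB : (starts B).val.map (rlen B) = (ℓ₁ + ℓ₂ + 1) ::ₘ T.map (rlen A) := by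
        rw [hSB, Finset.erase_val, hcons2, Multiset.map_cons, hlB]
        congr 1
        apply Multiset.map_congr rfl
        intro y hy
        exact hkeep y (hTmem y hy).1 (hTmem y hy).2
      rw [eA, eB]
      have := lexLe_merge (T.map (rlen A)) ℓ₂ ℓ₁ (rlen_pos h2) (rlen_pos hy₀A)
      rwa [show ℓ₂ + ℓ₁ + 1 = ℓ₁ + ℓ₂ + 1 by omega] at this
    · -- case b : extend a run at its end (x-1 ∈ A, x+1 ∉ A)
      obtain ⟨y₀, hy₀S, hreach⟩ := start_exists hA h1
      have hy₀A : y₀ ∈ A := (mem_starts.mp hy₀S).1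
      set t := (x - 1 - y₀).val with htdef
      set ℓ₁ := rlen A y₀ with hl1def
      have hzx : y₀ + (t : ZMod n) = x - 1 := by
        rw [htdef, ZMod.natCast_rightInverse _]; ring
      have hl1n : ℓ₁ < n := rlen_lt_n hA y₀
      have hcast1 : y₀ + ((t + 1 : ℕ) : ZMod n) = x := by
        push_cast
        rw [← add_assoc, hzx]; ring
      have hl1 : ℓ₁ = t + 1 := by
        have hub : rlen A y₀ ≤ t + 1 := by
          apply rlen_le_of_not_mem
          rw [hcast1]; exact hx
        omega
      have hSB : starts B = starts A := by
        ext y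
        rw [mem_starts, mem_starts]
        constructor
        · rintro ⟨hyB, hy1⟩
          rcases Finset.mem_insert.mp hyB with rfl | hyA
          · exact absurd (hAB h1) hy1
          · exact ⟨hyA, fun hc => hy1 (hAB hc)⟩
        · rintro ⟨hyA, hy1⟩
          refine ⟨hAB hyA, fun hc => ?_⟩
          rcases Finset.mem_insert.mp hc with h | h
          · exact h2 (by rw [show x + 1 = y from by rw [← h]; ring]; exact hyA)
          · exact hy1 h
      have hlB : rlen B y₀ = ℓ₁ + 1 := by
        have hcast2 : y₀ + ((t + 2 : ℕ) : ZMod n) = x + 1 := by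
          have : ((t + 2 : ℕ) : ZMod n) = ((t + 1 : ℕ) : ZMod n) + 1 := by push_cast; ring
          rw [this, ← add_assoc, hcast1]
        have hub : rlen B y₀ ≤ t + 2 := by
          apply rlen_le_of_not_mem
          rw [hcast2]
          intro hc
          rcases Finset.mem_insert.mp hc with h | h
          · exact hx1' h
          · exact h2 h
        have hlb : t + 1 < rlen B y₀ := by
          apply lt_rlen (by omega)
          intro j hj
          rcases Nat.lt_or_ge j (t+1) with hlt | hge
          · exact hAB ((chain_of_lt_rlen (show j < ℓ₁ by omega)).2 j le_rfl)
          · have hje : j = t + 1 := by omega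
            subst hje
            rw [hcast1]; exact hxB
        omega
      have hkeep : ∀ y, y ∈ starts A → y ≠ y₀ → rlen B y = rlen A y := by
        intro y hyS hne
        apply keep_len hA (mem_starts.mp hyS).1
        intro heq
        obtain ⟨_, hv⟩ := end_eq_x (mem_starts.mp hyS).1 heq
        exact hne (start_unique hyS hy₀S hv hreach)
      have hy₀v : y₀ ∈ (starts A).val := hy₀S
      set T := (starts A).val.erase y₀ with hTdef
      have hcons : (starts A).val = y₀ ::ₘ T := (Multiset.cons_erase hy₀v).symm
      have hTmem : ∀ y ∈ T, y ∈ starts A ∧ y ≠ y₀ := by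
        intro y hy
        have h5 := (starts A).nodup.mem_erase_iff.mp hy
        exact ⟨h5.2, h5.1⟩
      have eA : (starts A).val.map (rlen A) = ℓ₁ ::ₘ T.map (rlen A) := by
        rw [hcons, Multiset.map_cons]
      have eB : (starts B).val.map (rlen B) = (ℓ₁ + 1) ::ₘ T.map (rlen A) := by
        rw [hSB, hcons, Multiset.map_cons, hlB]
        congr 1
        apply Multiset.map_congr rfl
        intro y hy
        exact hkeep y (hTmem y hy).1 (hTmem y hy).2
      rw [eA, eB]
      exact lexLe_replace _ ℓ₁ (ℓ₁ + 1) (rlen_pos hy₀A) (by omega)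
    · -- case c : extend a run at its start (x-1 ∉ A, x+1 ∈ A)
      have hx1S : x + 1 ∈ starts A := mem_starts.mpr ⟨h2, by
        rw [show x + 1 - 1 = x from by ring]; exact hx⟩
      set ℓ := rlen A (x+1) with hldef
      have hln : ℓ < n := rlen_lt_n hA (x+1)
      have hSB : starts B = insert x ((starts A).erase (x+1)) := by
        ext y
        rw [mem_starts]
        conv_rhs => rw [Finset.mem_insert, Finset.mem_erase, mem_starts]
        constructor
        · rintro ⟨hyB, hy1⟩
          rcases Finset.mem_insert.mp hyB with rfl | hyA
          · exact Or.inl rfl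
          · refine Or.inr ⟨?_, hyA, fun hc => hy1 (hAB hc)⟩
            rintro rfl
            exact hy1 (by rw [show x + 1 - 1 = x from by ring]; exact hxB)
        · rintro (rfl | ⟨hne, hyA, hy1⟩)
          · refine ⟨hxB, fun hc => ?_⟩
            rcases Finset.mem_insert.mp hc with h | h
            · exact hx1 h
            · exact h1 h
          · refine ⟨hAB hyA, fun hc => ?_⟩
            rcases Finset.mem_insert.mp hc with h | h
            · exact hne (by rw [← h]; ring)
            · exact hy1 h
      have hlx : rlen B x = ℓ + 1 := by
        have hub : rlen B x ≤ ℓ + 1 := by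
          rcases Nat.eq_or_lt_of_le (show ℓ + 1 ≤ n by omega) with he | hlt
          · rw [he]; exact rlen_le_n B x
          · apply rlen_le_of_not_mem
            intro hc
            rcases Finset.mem_insert.mp hc with h | h
            · have h4 : ((ℓ + 1 : ℕ) : ZMod n) = 0 := by
                have : x + ((ℓ+1 : ℕ) : ZMod n) - x = 0 := by rw [h]; ring
                rw [← this]; ring
              have := Nat.le_of_dvd (by omega) ((ZMod.natCast_eq_zero_iff _ n).mp h4)
              omega
            · apply end_not_mem hA (x+1)
              rw [show (x+1) + ((ℓ : ℕ) : ZMod n) = x + ((ℓ+1 : ℕ) : ZMod n) from by push_cast; ring]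
              exact h
        have hlb : ℓ < rlen B x := by
          apply lt_rlen (by omega)
          intro j hj
          rcases Nat.eq_zero_or_pos j with rfl | hj0
          · simpa using hxB
          · apply hAB
            have hc := (chain_of_lt_rlen (show j - 1 < ℓ by omega)).2 (j-1) le_rfl
            rw [show x + (j : ZMod n) = (x+1) + ((j - 1 : ℕ) : ZMod n) from by
              rw [cast_pred hj0]; ring]
            exact hc
        omega
      have hkeep : ∀ y, y ∈ starts A → rlen B y = rlen A y := by
        intro y hyS
        apply keep_len hA (mem_starts.mp hyS).1
        intro heq
        exact h1 (end_eq_x (mem_starts.mp hyS).1 heq).1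
      have hx1v : (x+1) ∈ (starts A).val := hx1S
      set T := (starts A).val.erase (x+1) with hTdef
      have hcons : (starts A).val = (x+1) ::ₘ T := (Multiset.cons_erase hx1v).symm
      have hxnE : x ∉ (starts A).erase (x+1) := fun h =>
        hx (mem_starts.mp (Finset.mem_of_mem_erase h)).1
      have hvalB : (starts B).val = x ::ₘ T := by
        rw [hSB, Finset.insert_val_of_notMem hxnE, Finset.erase_val]
      have hTmem : ∀ y ∈ T, y ∈ starts A := fun y hy =>
        Multiset.mem_of_mem_erase hy
      have eA : (starts A).val.map (rlen A) = ℓ ::ₘ T.map (rlen A) := by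
        rw [hcons, Multiset.map_cons]
      have eB : (starts B).val.map (rlen B) = (ℓ + 1) ::ₘ T.map (rlen A) := by
        rw [hvalB, Multiset.map_cons, hlx]
        congr 1
        apply Multiset.map_congr rfl
        intro y hy
        exact hkeep y (hTmem y hy)
      rw [eA, eB]
      exact lexLe_replace _ ℓ (ℓ + 1) (rlen_pos h2) (by omega)
    · -- case a : new singleton run
      have hSB : starts B = insert x (starts A) := by
        ext y
        rw [mem_starts]
        conv_rhs => rw [Finset.mem_insert, mem_starts]
        constructor
        · rintro ⟨hyB, hy1⟩
          rcases Finset.mem_insert.mp hyB with rfl | hyA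
          · exact Or.inl rfl
          · exact Or.inr ⟨hyA, fun hc => hy1 (hAB hc)⟩
        · rintro (rfl | ⟨hyA, hy1⟩)
          · refine ⟨hxB, fun hc => ?_⟩
            rcases Finset.mem_insert.mp hc with h | h
            · exact hx1 h
            · exact h1 h
          · refine ⟨hAB hyA, fun hc => ?_⟩
            rcases Finset.mem_insert.mp hc with h | h
            · exact h2 (by rw [show x + 1 = y from by rw [← h]; ring]; exact hyA)
            · exact hy1 h
      have hxnS : x ∉ starts A := fun h => hx (mem_starts.mp h).1
      have hvalB : (starts B).val = x ::ₘ (starts A).val := by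
        rw [hSB, Finset.insert_val_of_notMem hxnS]
      have hlx : rlen B x = 1 := by
        have hub : rlen B x ≤ 1 := by
          apply rlen_le_of_not_mem
          rw [Nat.cast_one]
          intro hc
          rcases Finset.mem_insert.mp hc with h | h
          · exact hx1' h
          · exact h2 h
        have := rlen_pos hxB
        omega
      have hkeep : ∀ y ∈ (starts A).val, rlen B y = rlen A y := by
        intro y hy
        have hyS := mem_starts.mp hy
        apply keep_len hA hyS.1
        intro heq
        exact h1 (end_eq_x hyS.1 heq).1
      have eB : (starts B).val.map (rlen B) = 1 ::ₘ (starts A).val.map (rlen A) := by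
        rw [hvalB, Multiset.map_cons, hlx]
        congr 1
        exact Multiset.map_congr rfl hkeep
      rw [eB]
      exact lexLe_cons_new _ 1
end Step

lemma LexLe.trans {l₁ l₂ l₃ : List ℕ} (h : LexLe l₁ l₂) (h' : LexLe l₂ l₃) : LexLe l₁ l₃ := by
  rcases h with h | rfl
  · rcases h' with h' | rfl
    · exact Or.inl (List.lex_trans Nat.lt_trans h h')
    · exact Or.inl h
  · exact h'

lemma mono_aux {n : ℕ} [NeZero n] :
    ∀ (k : ℕ) (A B : Finset (ZMod n)), (B \ A).card = k → A ⊆ B →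
    LexLe (sdesc (cycleRunLengths n A)) (sdesc (cycleRunLengths n B)) := by
  intro k
  induction k using Nat.strong_induction_on with
  | _ k IH =>
    intro A B hk hAB
    by_cases h0 : B \ A = ∅
    · have hEq : A = B := Finset.Subset.antisymm hAB (Finset.sdiff_eq_empty_iff_subset.mp h0)
      rw [hEq]; exact LexLe.refl _
    · obtain ⟨x, hx⟩ := Finset.nonempty_iff_ne_empty.mpr h0
      have hxB : x ∈ B := (Finset.mem_sdiff.mp hx).1
      have hxA : x ∉ A := (Finset.mem_sdiff.mp hx).2
      have h1 : insert x A ⊆ B := Finset.insert_subset hxB hAB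
      have h3 : (B \ insert x A).card < k := by
        rw [Finset.sdiff_insert, ← hk]
        exact Finset.card_erase_lt_of_mem hx
      exact (step_insert hxA).trans (IH _ h3 _ B rfl h1)

lemma runLexGT_iff (u z : Multiset ℕ) :
    runLexGT u z ↔ List.Lex (· < ·) (sdesc z) (sdesc u) := Iff.rfl


/-- The family `T` of subsets `S` of the cycle `[2r+1]` whose run-length sequence is
lexicographically greater than that of the complement is intersecting. -/
theorem run_family_intersecting (r : ℕ) (S₁ S₂ : Finset (ZMod (2 * r + 1)))
    (h₁ : runLexGT (cycleRunLengths (2 * r + 1) S₁) (cycleRunLengths (2 * r + 1) S₁ᶜ))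
    (h₂ : runLexGT (cycleRunLengths (2 * r + 1) S₂) (cycleRunLengths (2 * r + 1) S₂ᶜ)) :
    (S₁ ∩ S₂).Nonempty := by
  by_contra hemp
  rw [Finset.not_nonempty_iff_eq_empty] at hemp
  rw [runLexGT_iff] at h₁ h₂
  have hsub1 : S₂ ⊆ S₁ᶜ := by
    intro y hy
    rw [Finset.mem_compl]
    intro hy1
    have : y ∈ S₁ ∩ S₂ := Finset.mem_inter.mpr ⟨hy1, hy⟩
    rw [hemp] at this
    exact absurd this (Finset.notMem_empty y)
  have hsub2 : S₁ ⊆ S₂ᶜ := by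
    intro y hy
    rw [Finset.mem_compl]
    intro hy2
    have : y ∈ S₁ ∩ S₂ := Finset.mem_inter.mpr ⟨hy, hy2⟩
    rw [hemp] at this
    exact absurd this (Finset.notMem_empty y)
  have m1 := mono_aux _ S₂ S₁ᶜ rfl hsub1
  have m2 := mono_aux _ S₁ S₂ᶜ rfl hsub2
  have l1 := m1.trans_lt h₁
  have l2 := m2.trans_lt h₂
  exact absurd l2 (asymm l1)
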